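/- arXiv:1903.02636 — 4 statements merged into one kernel-verified Lean document; each statement's English description precedes it below -/
import Mathlib

section
/- The peakon profile φ(x) = e^{-|x|} satisfies the identity -φ + (1/2)φ² + (3/4)(φ ∗ φ²) = 0 for all x ∈ ℝ, where ∗ denotes convolution on ℝ. -/
open Real MeasureTheory Set Filter

lemma exp_tendsto_aux (a : ℝ) (ha : 0 < a) :
    Tendsto (fun y : ℝ => -Real.exp (-(a * y)) / a) atTop (nhds 0) := by
  have h1 : Tendsto (fun y : ℝ => -(a * y)) atTop atBot :=
    tendsto_neg_atTop_atBot.comp ((tendsto_const_mul_atTop_of_pos ha).mpr tendsto_id)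
  have h2 : Tendsto (fun y : ℝ => Real.exp (-(a * y))) atTop (nhds 0) :=
    Real.tendsto_exp_atBot.comp h1
  have := (h2.neg).div_const a
  simpa using this

lemma exp_hasDeriv_aux (a : ℝ) (ha : 0 < a) (y : ℝ) :
    HasDerivAt (fun y : ℝ => -Real.exp (-(a * y)) / a) (Real.exp (-(a * y))) y := by
  have h : HasDerivAt (fun y : ℝ => -(a * y)) (-a) y := by
    simpa using ((hasDerivAt_id y).const_mul a).fun_neg
  have := ((h.exp).fun_neg).div_const a
  exact this.congr_deriv (by rw [mul_neg, neg_neg, mul_div_assoc, div_self ha.ne', mul_one])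

lemma exp_integral_Ioi (a c : ℝ) (ha : 0 < a) :
    ∫ y in Ioi c, Real.exp (-(a * y)) = Real.exp (-(a * c)) / a := by
  have := integral_Ioi_of_hasDerivAt_of_nonneg' (a := c)
    (fun y _ => exp_hasDeriv_aux a ha y) (fun y _ => (Real.exp_pos _).le)
    (exp_tendsto_aux a ha)
  rw [this]
  field_simp
  ring

lemma exp_integrableOn_Ioi (a c : ℝ) (ha : 0 < a) :
    IntegrableOn (fun y : ℝ => Real.exp (-(a * y))) (Ioi c) := by
  exact integrableOn_Ioi_deriv_of_nonneg' (fun y _ => exp_hasDeriv_aux a ha y)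
    (fun y _ => (Real.exp_pos _).le) (exp_tendsto_aux a ha)

lemma exp_integral_Iic (a c : ℝ) (ha : 0 < a) :
    ∫ y in Iic c, Real.exp (a * y) = Real.exp (a * c) / a := by
  have h := integral_comp_neg_Ioi (c := -c) (f := fun y : ℝ => Real.exp (a * y))
  simp only [neg_neg] at h
  rw [← h]
  have : ∀ y : ℝ, Real.exp (a * -y) = Real.exp (-(a * y)) := by intro y; ring_nf
  simp_rw [this, exp_integral_Ioi a (-c) ha]
  ring_nf

lemma exp_integrableOn_Iic (a c : ℝ) (ha : 0 < a) :
    IntegrableOn (fun y : ℝ => Real.exp (a * y)) (Iic c) := by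
  have h : IntegrableOn (fun y : ℝ => Real.exp (-(a * y))) (Ici (-c)) :=
    Iff.mpr integrableOn_Ici_iff_integrableOn_Ioi (exp_integrableOn_Ioi a (-c) ha)
  have key := (MeasurePreserving.integrableOn_comp_preimage
    (Measure.measurePreserving_neg (volume : Measure ℝ))
    (Homeomorph.neg ℝ).measurableEmbedding
    (f := fun y : ℝ => Real.exp (a * y)) (s := Iic c)).mp
  have hpre : (Neg.neg : ℝ → ℝ) ⁻¹' (Iic c) = Ici (-c) := by
    ext y; simp [neg_le]
  apply key
  rw [hpre]
  refine h.congr_fun (fun y _ => ?_) measurableSet_Ici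
  show Real.exp (-(a * y)) = Real.exp (a * -y)
  ring_nf

noncomputable def peakon : ℝ → ℝ := fun x => Real.exp (-|x|)

lemma peakon_conv_key (x : ℝ) (hx : 0 ≤ x) :
    ∫ y : ℝ, Real.exp (-|x - y|) * Real.exp (-|y|) ^ 2
      = 4/3 * Real.exp (-x) - 2/3 * Real.exp (-x) ^ 2 := by
  set f : ℝ → ℝ := fun y => Real.exp (-|x - y|) * Real.exp (-|y|) ^ 2 with hf
  have hcont : Continuous f := by fun_prop
  -- the three pieces
  have e1 : ∀ y ∈ Iic (0 : ℝ), f y = Real.exp (-x) * Real.exp (3 * y) := by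
    intro y hy
    simp only [mem_Iic] at hy
    rw [hf]
    simp only
    rw [abs_of_nonneg (by linarith), abs_of_nonpos hy, ← Real.exp_nat_mul, ← Real.exp_add,
      ← Real.exp_add]
    ring_nf
  have e2 : ∀ y ∈ Ioc (0 : ℝ) x, f y = Real.exp (-x) * Real.exp (-y) := by
    intro y hy
    simp only [mem_Ioc] at hy
    rw [hf]
    simp only
    rw [abs_of_nonneg (by linarith [hy.2]), abs_of_nonneg hy.1.le, ← Real.exp_nat_mul,
      ← Real.exp_add, ← Real.exp_add]
    ring_nf
  have e3 : ∀ y ∈ Ioi x, f y = Real.exp x * Real.exp (-(3 * y)) := by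
    intro y hy
    simp only [mem_Ioi] at hy
    rw [hf]
    simp only
    rw [abs_of_nonpos (by linarith), abs_of_nonneg (by linarith), ← Real.exp_nat_mul,
      ← Real.exp_add, ← Real.exp_add]
    ring_nf
  -- integrability on pieces
  have i1 : IntegrableOn f (Iic 0) := by
    have b : IntegrableOn (fun y : ℝ => Real.exp (-x) * Real.exp (3 * y)) (Iic 0) :=
      (exp_integrableOn_Iic 3 0 (by norm_num)).const_mul (Real.exp (-x))
    exact b.congr_fun (fun y hy => (e1 y hy).symm) measurableSet_Iic
  have i2 : IntegrableOn f (Ioc 0 x) := hcont.integrableOn_Ioc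
  have i3 : IntegrableOn f (Ioi x) := by
    have b : IntegrableOn (fun y : ℝ => Real.exp x * Real.exp (-(3 * y))) (Ioi x) :=
      (exp_integrableOn_Ioi 3 x (by norm_num)).const_mul (Real.exp x)
    exact b.congr_fun (fun y hy => (e3 y hy).symm) measurableSet_Ioi
  -- split the integral
  have hsplit1 : Ioc 0 x ∪ Ioi x = Ioi (0 : ℝ) := Ioc_union_Ioi_eq_Ioi hx
  have i23 : IntegrableOn f (Ioi 0) := by
    rw [← hsplit1]; exact i2.union i3
  have hIoi : ∫ y in Ioi (0:ℝ), f y = (∫ y in Ioc 0 x, f y) + ∫ y in Ioi x, f y := by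
    rw [← hsplit1, setIntegral_union (Ioc_disjoint_Ioi le_rfl) measurableSet_Ioi i2 i3]
  have htotal : ∫ y, f y = (∫ y in Iic (0:ℝ), f y) + ∫ y in Ioi (0:ℝ), f y := by
    rw [← setIntegral_union (Iic_disjoint_Ioi le_rfl) measurableSet_Ioi i1 i23,
      Iic_union_Ioi, setIntegral_univ]
  -- compute each piece
  have v1 : ∫ y in Iic (0:ℝ), f y = Real.exp (-x) / 3 := by
    rw [setIntegral_congr_fun measurableSet_Iic e1, integral_const_mul,
      exp_integral_Iic 3 0 (by norm_num)]
    simp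
    ring
  have v3 : ∫ y in Ioi x, f y = Real.exp (-x) ^ 2 / 3 := by
    rw [setIntegral_congr_fun measurableSet_Ioi e3, integral_const_mul,
      exp_integral_Ioi 3 x (by norm_num)]
    rw [show Real.exp x * (Real.exp (-(3 * x)) / 3) = Real.exp (x + -(3*x)) / 3 by
      rw [Real.exp_add]; ring, pow_two, ← Real.exp_add]
    ring_nf
  have v2 : ∫ y in Ioc (0:ℝ) x, f y = Real.exp (-x) - Real.exp (-x) ^ 2 := by
    rw [setIntegral_congr_fun measurableSet_Ioc e2]
    rw [← intervalIntegral.integral_of_le hx, intervalIntegral.integral_const_mul]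
    have : ∫ y in (0:ℝ)..x, Real.exp (-y) = 1 - Real.exp (-x) := by
      rw [intervalIntegral.integral_comp_neg (fun y => Real.exp y), integral_exp]
      simp
    rw [this, show Real.exp (-x) * (1 - Real.exp (-x)) = Real.exp (-x) - Real.exp (-x + -x) by
      rw [Real.exp_add]; ring, pow_two, ← Real.exp_add]
  rw [htotal, hIoi, v1, v2, v3]
  ring

theorem peakon_identity (x : ℝ) :
    -peakon x + (1/2) * (peakon x)^2
      + (3/4) * ∫ y : ℝ, peakon (x - y) * (peakon y)^2 = 0 := by
  have key : ∫ y : ℝ, peakon (x - y) * (peakon y) ^ 2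
      = 4/3 * Real.exp (-|x|) - 2/3 * Real.exp (-|x|) ^ 2 := by
    rcases le_total 0 x with hx | hx
    · rw [show |x| = x from abs_of_nonneg hx]
      exact peakon_conv_key x hx
    · have h1 : ∫ y : ℝ, peakon (x - y) * (peakon y) ^ 2
          = ∫ y : ℝ, Real.exp (-|(-x) - y|) * Real.exp (-|y|) ^ 2 := by
        rw [← MeasureTheory.integral_neg_eq_self
          (fun y => Real.exp (-|(-x) - y|) * Real.exp (-|y|) ^ 2) volume]
        congr 1
        funext y
        simp only [peakon, abs_neg]
        congr 3
        · rw [show x - y = -((-x) - (-y)) by ring, abs_neg]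
      rw [h1, peakon_conv_key (-x) (by linarith), show |x| = -x from abs_of_nonpos hx]
  simp only [peakon] at *
  rw [key]
  ring
end

section
/- For φ(x) = e^{-|x|} and any v ∈ H¹(ℝ), one has (1/2)(φ ∗ (φ' v))(x) + (1/2)(φ' ∗ (φ v))(x) = −φ(x) ∫₀ˣ v(y) dy for all x ∈ ℝ. -/
open Real MeasureTheory intervalIntegral Set

noncomputable def peakon' : ℝ → ℝ := fun x => -(Real.sign x) * Real.exp (-|x|)

lemma measurable_realSign : Measurable Real.sign := by
  unfold Real.sign
  exact Measurable.ite measurableSet_Iio measurable_const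
    (Measurable.ite measurableSet_Ioi measurable_const measurable_const)

lemma integrable_exp_neg_two_abs : Integrable (fun y : ℝ => Real.exp (-(2 * |y|))) := by
  have h1 : IntegrableOn (fun y : ℝ => Real.exp (-(2 * |y|))) (Ioi 0) := by
    refine (exp_neg_integrableOn_Ioi 0 two_pos).congr_fun (fun y hy => ?_) measurableSet_Ioi
    rw [abs_of_pos hy]; ring_nf
  have h2 : IntegrableOn (fun y : ℝ => Real.exp (-(2 * |y|))) (Iic 0) := by
    rw [← Measure.map_neg_eq_self (volume : Measure ℝ)]
    have m : MeasurableEmbedding fun x : ℝ => -x := (Homeomorph.neg ℝ).measurableEmbedding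
    rw [m.integrableOn_map_iff]
    simp_rw [Function.comp_def, abs_neg, neg_preimage, neg_Iic, neg_zero]
    exact (integrableOn_Ici_iff_integrableOn_Ioi).mpr h1
  have := integrableOn_union.mpr ⟨h2, h1⟩
  rwa [Iic_union_Ioi, integrableOn_univ] at this

lemma memLp_peakon : MemLp peakon 2 (volume : Measure ℝ) := by
  rw [memLp_two_iff_integrable_sq (by unfold peakon; fun_prop : Continuous peakon).aestronglyMeasurable]
  refine integrable_exp_neg_two_abs.congr ?_
  refine Filter.Eventually.of_forall fun y => ?_
  simp only [peakon, sq, ← Real.exp_add]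
  ring_nf

lemma integrable_peakon_mul (v : ℝ → ℝ) (hv_L2 : MemLp v 2 (volume : Measure ℝ)) :
    Integrable (fun y => Real.exp (-|y|) * v y) := by
  have h := hv_L2.smul (φ := peakon) memLp_peakon
    (p := 2) (q := 2) (r := 1) (hpqr := ⟨by rw [inv_one]; exact ENNReal.inv_two_add_inv_two⟩)
  rw [← memLp_one_iff_integrable]
  exact h

lemma pointwise_key (v : ℝ → ℝ) (x y : ℝ) (hy0 : y ≠ 0) (hyx : y ≠ x) :
    peakon (x - y) * (peakon' y * v y) + peakon' (x - y) * (peakon y * v y)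
      = Set.indicator (Set.uIoc 0 x)
          (fun y => -2 * Real.sign x * Real.exp (-|x|) * v y) y := by
  simp only [peakon, peakon']
  rcases lt_trichotomy x 0 with hx | hx | hx
  · -- x < 0 : uIoc 0 x = Ioc x 0
    rw [Set.uIoc_of_ge hx.le]
    rcases lt_trichotomy y x with h1 | h1 | h1
    · rw [Set.indicator_of_notMem (by simp [Set.mem_Ioc]; intro h; linarith)]
      rw [Real.sign_of_neg (by linarith : y < 0), Real.sign_of_pos (by linarith : 0 < x - y)]
      ring
    · exact absurd h1 hyx
    · rcases lt_trichotomy y 0 with h2 | h2 | h2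
      · rw [Set.indicator_of_mem (by simp [Set.mem_Ioc]; constructor <;> linarith)]
        rw [Real.sign_of_neg h2, Real.sign_of_neg (by linarith : x - y < 0),
          Real.sign_of_neg hx]
        have hE : Real.exp (-|x - y|) * Real.exp (-|y|) = Real.exp (-|x|) := by
          rw [← Real.exp_add, abs_of_neg (by linarith : x - y < 0), abs_of_neg h2,
            abs_of_neg hx]
          ring_nf
        linear_combination (2 * v y) * hE
      · exact absurd h2 hy0
      · rw [Set.indicator_of_notMem (by simp [Set.mem_Ioc]; intro h; linarith)]
        rw [Real.sign_of_pos h2, Real.sign_of_neg (by linarith : x - y < 0)]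
        ring
  · -- x = 0
    subst hx
    rw [Set.indicator_of_notMem (by simp [Set.uIoc])]
    rw [zero_sub, Real.sign_neg, abs_neg]
    ring
  · -- 0 < x : uIoc 0 x = Ioc 0 x
    rw [Set.uIoc_of_le hx.le]
    rcases lt_trichotomy y 0 with h1 | h1 | h1
    · rw [Set.indicator_of_notMem (by simp [Set.mem_Ioc]; intro h; linarith)]
      rw [Real.sign_of_neg h1, Real.sign_of_pos (by linarith : 0 < x - y)]
      ring
    · exact absurd h1 hy0
    · rcases lt_trichotomy y x with h2 | h2 | h2
      · rw [Set.indicator_of_mem (by simp [Set.mem_Ioc]; constructor <;> linarith)]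
        rw [Real.sign_of_pos h1, Real.sign_of_pos (by linarith : 0 < x - y),
          Real.sign_of_pos hx]
        have hE : Real.exp (-|x - y|) * Real.exp (-|y|) = Real.exp (-|x|) := by
          rw [← Real.exp_add, abs_of_pos (by linarith : 0 < x - y), abs_of_pos h1,
            abs_of_pos hx]
          ring_nf
        linear_combination (-2 * v y) * hE
      · exact absurd h2 hyx
      · rw [Set.indicator_of_notMem (by simp [Set.mem_Ioc]; intro h; linarith)]
        rw [Real.sign_of_pos h1, Real.sign_of_neg (by linarith : x - y < 0)]
        ring

theorem convolution_identity_half (v : ℝ → ℝ)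
    (hv_cont : Continuous v)
    (hv_L2 : MemLp v 2 (volume : Measure ℝ))
    (hv'_L2 : MemLp (deriv v) 2 (volume : Measure ℝ))
    (hv_diff : ∀ᵐ x : ℝ, DifferentiableAt ℝ v x) (x : ℝ) :
    (1/2) * (∫ y : ℝ, peakon (x - y) * (peakon' y * v y))
      + (1/2) * (∫ y : ℝ, peakon' (x - y) * (peakon y * v y))
      = -peakon x * ∫ y in (0:ℝ)..x, v y := by
  have hbase := integrable_peakon_mul v hv_L2
  have hsign : ∀ z : ℝ, |Real.sign z| ≤ 1 := by
    intro z
    rcases lt_trichotomy z 0 with h | h | h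
    · rw [Real.sign_of_neg h]; norm_num
    · subst h; rw [Real.sign_zero]; norm_num
    · rw [Real.sign_of_pos h]; norm_num
  have hmeas1 : AEStronglyMeasurable
      (fun y => peakon (x - y) * (peakon' y * v y)) volume := by
    apply Measurable.aestronglyMeasurable
    simp only [peakon, peakon']
    have msgn : Measurable fun y : ℝ => Real.sign y := measurable_realSign
    exact (by fun_prop : Measurable fun y : ℝ => Real.exp (-|x - y|)).mul
      ((msgn.neg.mul (by fun_prop : Measurable fun y : ℝ => Real.exp (-|y|))).mul
        hv_cont.measurable)
  have hmeas2 : AEStronglyMeasurable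
      (fun y => peakon' (x - y) * (peakon y * v y)) volume := by
    apply Measurable.aestronglyMeasurable
    simp only [peakon, peakon']
    have msgn : Measurable fun y : ℝ => Real.sign (x - y) :=
      measurable_realSign.comp (by fun_prop)
    exact ((msgn.neg.mul (by fun_prop : Measurable fun y : ℝ => Real.exp (-|x - y|)))).mul
      ((by fun_prop : Measurable fun y : ℝ => Real.exp (-|y|)).mul hv_cont.measurable)
  have hpk_le_one : ∀ z : ℝ, Real.exp (-|z|) ≤ 1 := by
    intro z; rw [← Real.exp_zero]; exact Real.exp_le_exp.mpr (neg_nonpos.mpr (abs_nonneg z))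
  have hInt1 : Integrable (fun y => peakon (x - y) * (peakon' y * v y)) := by
    refine hbase.mono hmeas1 (Filter.Eventually.of_forall fun y => ?_)
    simp only [peakon, peakon', Real.norm_eq_abs, abs_mul, abs_neg]
    have hA : |Real.exp (-|x - y|)| ≤ 1 := by
      rw [abs_of_pos (Real.exp_pos _)]; exact hpk_le_one _
    nlinarith [hsign y, abs_nonneg (Real.exp (-|y|)), abs_nonneg (v y),
      abs_nonneg (Real.sign y), abs_nonneg (Real.exp (-|x - y|)),
      mul_nonneg (abs_nonneg (Real.exp (-|y|))) (abs_nonneg (v y)),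
      mul_nonneg (mul_nonneg (abs_nonneg (Real.sign y)) (abs_nonneg (Real.exp (-|y|)))) (abs_nonneg (v y))]
  have hInt2 : Integrable (fun y => peakon' (x - y) * (peakon y * v y)) := by
    refine hbase.mono hmeas2 (Filter.Eventually.of_forall fun y => ?_)
    simp only [peakon, peakon', Real.norm_eq_abs, abs_mul, abs_neg]
    have hA : |Real.exp (-|x - y|)| ≤ 1 := by
      rw [abs_of_pos (Real.exp_pos _)]; exact hpk_le_one _
    have hab : |Real.sign (x - y)| * |Real.exp (-|x - y|)| ≤ 1 := by
      nlinarith [hsign (x - y), abs_nonneg (Real.sign (x - y)), abs_nonneg (Real.exp (-|x - y|))]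
    nlinarith [hab, hsign (x - y), abs_nonneg (Real.exp (-|y|)), abs_nonneg (v y),
      abs_nonneg (Real.sign (x - y)), abs_nonneg (Real.exp (-|x - y|)),
      mul_nonneg (abs_nonneg (Real.exp (-|y|))) (abs_nonneg (v y)),
      mul_nonneg (mul_nonneg (abs_nonneg (Real.sign (x - y))) (abs_nonneg (Real.exp (-|x - y|)))) (mul_nonneg (abs_nonneg (Real.exp (-|y|))) (abs_nonneg (v y)))]
  rw [show (1/2 : ℝ) * (∫ y : ℝ, peakon (x - y) * (peakon' y * v y))
      + (1/2) * (∫ y : ℝ, peakon' (x - y) * (peakon y * v y))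
      = (1/2) * ((∫ y : ℝ, peakon (x - y) * (peakon' y * v y))
        + (∫ y : ℝ, peakon' (x - y) * (peakon y * v y))) by ring]
  rw [← integral_add hInt1 hInt2]
  have hae : (fun y => peakon (x - y) * (peakon' y * v y)
        + peakon' (x - y) * (peakon y * v y))
      =ᵐ[volume] (fun y => Set.indicator (Set.uIoc 0 x)
          (fun y => -2 * Real.sign x * Real.exp (-|x|) * v y) y) := by
    have h0 : ∀ᵐ y : ℝ ∂volume, y ≠ 0 := by
      rw [ae_iff]
      exact measure_mono_null (fun z hz => by simpa using hz) (measure_singleton (0:ℝ))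
    have hx' : ∀ᵐ y : ℝ ∂volume, y ≠ x := by
      rw [ae_iff]
      exact measure_mono_null (fun z hz => by simpa using hz) (measure_singleton x)
    filter_upwards [h0, hx'] with y hy0 hyx
    exact pointwise_key v x y hy0 hyx
  rw [integral_congr_ae hae, MeasureTheory.integral_indicator measurableSet_uIoc,
    MeasureTheory.integral_const_mul]
  have huIoc := intervalIntegral.intervalIntegral_eq_integral_uIoc v 0 x volume
  simp only [peakon]
  rcases lt_trichotomy x 0 with hx | hx | hx
  · rw [if_neg (by linarith)] at huIoc
    rw [Real.sign_of_neg hx]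
    rw [huIoc]
    simp only [neg_smul, one_smul, smul_eq_mul]
    ring
  · subst hx
    simp [intervalIntegral.integral_same, Set.uIoc, Real.sign_zero]
  · rw [if_pos hx.le] at huIoc
    rw [Real.sign_of_pos hx, huIoc]
    simp only [one_smul, smul_eq_mul]
    ring
end

section
/- Let s > 0, v₀(s), w₀(s) be real numbers. The function V(t) = v₀(s) + w₀(s)·((e^t − 1)e^{−s})/(1 + (e^t − 1)e^{−s}) solves the initial value problem dV/dt = φ(X(t,s)) W(t), V(0) = v₀(s), where X(t,s) = log(1 + (e^s − 1)e^{−t}), W(t) = w₀(s)/(1 + (e^t − 1)e^{−s}), and φ(x) = e^{−x} for x > 0. -/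
open Real

noncomputable def charX (t s : ℝ) : ℝ :=
  Real.log (1 + (Real.exp s - 1) * Real.exp (-t))

theorem V_solves_linearized (s : ℝ) (hs : 0 < s) (v₀s w₀s : ℝ) :
    let W : ℝ → ℝ := fun t => w₀s / (1 + (Real.exp t - 1) * Real.exp (-s))
    let V : ℝ → ℝ := fun t => v₀s +
      w₀s * ((Real.exp t - 1) * Real.exp (-s)) / (1 + (Real.exp t - 1) * Real.exp (-s))
    (V 0 = v₀s) ∧
    (∀ t : ℝ, HasDerivAt V (Real.exp (-(charX t s)) * W t) t) := by
  intro W V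
  have ha : (1:ℝ) < Real.exp s := by
    rw [← Real.exp_zero]; exact Real.exp_lt_exp.mpr hs
  constructor
  · simp [V]
  · intro t
    have hb : 0 < Real.exp t := Real.exp_pos t
    have hbi : 0 < Real.exp (-t) := Real.exp_pos _
    have hai : 0 < Real.exp (-s) := Real.exp_pos _
    have hE : 0 < Real.exp s + Real.exp t - 1 := by linarith
    have hD : 0 < 1 + (Real.exp t - 1) * Real.exp (-s) := by
      have : 1 + (Real.exp t - 1) * Real.exp (-s)
          = Real.exp (-s) * (Real.exp s + Real.exp t - 1) := by
        have h1 : Real.exp (-s) * Real.exp s = 1 := by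
          rw [← Real.exp_add]; simp
        ring_nf
        nlinarith [h1]
      rw [this]; positivity
    have hD2 : 0 < 1 + (Real.exp s - 1) * Real.exp (-t) := by
      have : 1 + (Real.exp s - 1) * Real.exp (-t)
          = Real.exp (-t) * (Real.exp s + Real.exp t - 1) := by
        have h1 : Real.exp (-t) * Real.exp t = 1 := by
          rw [← Real.exp_add]; simp
        ring_nf
        nlinarith [h1]
      rw [this]; positivity
    -- derivative of numerator and denominator
    have hN : HasDerivAt (fun t => w₀s * ((Real.exp t - 1) * Real.exp (-s)))
        (w₀s * (Real.exp t * Real.exp (-s))) t := by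
      have := (Real.hasDerivAt_exp t).sub_const 1
      exact ((this.mul_const (Real.exp (-s))).const_mul w₀s)
    have hDd : HasDerivAt (fun t => 1 + (Real.exp t - 1) * Real.exp (-s))
        (Real.exp t * Real.exp (-s)) t := by
      have := ((Real.hasDerivAt_exp t).sub_const 1).mul_const (Real.exp (-s))
      exact (this.const_add 1)
    have hdiv := hN.div hDd (ne_of_gt hD)
    have hV := (hdiv.const_add v₀s)
    convert hV using 1
    case e'_4 => rfl
    case e'_5 => rfl
    case e'_8 => rfl
    -- show the derivative value equals exp(-charX t s) * W t
    have hexp : Real.exp (-(charX t s)) = (1 + (Real.exp s - 1) * Real.exp (-t))⁻¹ := by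
      rw [charX, Real.exp_neg, Real.exp_log hD2]
    rw [hexp]
    show (1 + (Real.exp s - 1) * Real.exp (-t))⁻¹
        * (w₀s / (1 + (Real.exp t - 1) * Real.exp (-s))) = _
    have ht1 : Real.exp (-t) * Real.exp t = 1 := by rw [← Real.exp_add]; simp
    have hs1 : Real.exp (-s) * Real.exp s = 1 := by rw [← Real.exp_add]; simp
    rw [Real.exp_neg t, Real.exp_neg s]
    have hAne : Real.exp t ≠ 0 := ne_of_gt hb
    have hBne : Real.exp s ≠ 0 := (Real.exp_pos s).ne'
    have hEne : Real.exp s + Real.exp t - 1 ≠ 0 := ne_of_gt hE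
    have hDeq : 1 + (Real.exp t - 1) * (Real.exp s)⁻¹
        = (Real.exp s + Real.exp t - 1) / Real.exp s := by
      field_simp; ring
    have hD2eq : 1 + (Real.exp s - 1) * (Real.exp t)⁻¹
        = (Real.exp s + Real.exp t - 1) / Real.exp t := by
      field_simp; ring
    rw [hDeq, hD2eq]
    field_simp
    ring
end

section
/- Suppose V₀, U₀ : [0,T) → ℝ are C¹ functions satisfying the differential inequality d/dt(V₀ + U₀) ≤ (V₀ + U₀) + V₀², with |V₀(t)| < ε for all t ∈ [0,T), V₀(0) + U₀(0) ≤ −2ε². Then V₀(t) + U₀(t) ≤ −ε² e^t for all t ∈ [0,T); in particular, if T > log 2 − 2 log ε then there exists t₀ ∈ (0,T) with |U₀(t₀)| > 1. -/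
open Real Set

theorem gronwall_instability (T ε : ℝ) (hT : 0 < T) (hε : 0 < ε)
    (V₀ U₀ : ℝ → ℝ)
    (hV : ∀ t ∈ Set.Ico (0:ℝ) T, DifferentiableAt ℝ V₀ t)
    (hU : ∀ t ∈ Set.Ico (0:ℝ) T, DifferentiableAt ℝ U₀ t)
    (hineq : ∀ t ∈ Set.Ico (0:ℝ) T,
      deriv (fun τ => V₀ τ + U₀ τ) t ≤ (V₀ t + U₀ t) + (V₀ t)^2)
    (hVsmall : ∀ t ∈ Set.Ico (0:ℝ) T, |V₀ t| < ε)
    (hinit : V₀ 0 + U₀ 0 ≤ -2 * ε^2) :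
    (∀ t ∈ Set.Ico (0:ℝ) T, V₀ t + U₀ t ≤ -ε^2 * Real.exp t) ∧
    (Real.log 2 - 2 * Real.log ε < T →
      ∃ t₀ ∈ Set.Ioo (0:ℝ) T, 1 < |U₀ t₀|) := by
  have hWd : ∀ t ∈ Set.Ico (0:ℝ) T, DifferentiableAt ℝ (fun τ => V₀ τ + U₀ τ) t :=
    fun t ht => (hV t ht).add (hU t ht)
  set g : ℝ → ℝ := fun t => Real.exp (-t) * (V₀ t + U₀ t + ε^2) with hgdef
  have hgderiv : ∀ t ∈ Set.Ico (0:ℝ) T,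
      HasDerivAt g (Real.exp (-t) * (deriv (fun τ => V₀ τ + U₀ τ) t - (V₀ t + U₀ t + ε^2))) t := by
    intro t ht
    have he : HasDerivAt (fun τ : ℝ => Real.exp (-τ)) (-Real.exp (-t)) t := by
      simpa [Function.comp_def] using (Real.hasDerivAt_exp (-t)).comp t (hasDerivAt_neg t)
    have hw : HasDerivAt (fun τ => V₀ τ + U₀ τ + ε^2)
        (deriv (fun τ => V₀ τ + U₀ τ) t) t :=
      ((hWd t ht).hasDerivAt).add_const (ε^2)
    have hm : HasDerivAt g (-Real.exp (-t) * (V₀ t + U₀ t + ε^2) + Real.exp (-t) * deriv (fun τ => V₀ τ + U₀ τ) t) t := he.mul hw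
    convert hm using 1
    ring
  have hanti : AntitoneOn g (Set.Ico 0 T) := by
    apply antitoneOn_of_deriv_nonpos (convex_Ico 0 T)
    · intro t ht
      exact ((hgderiv t ht).differentiableAt).continuousAt.continuousWithinAt
    · intro t ht
      rw [interior_Ico] at ht
      exact ((hgderiv t (Ioo_subset_Ico_self ht)).differentiableAt).differentiableWithinAt
    · intro t ht
      rw [interior_Ico] at ht
      have ht' := Ioo_subset_Ico_self ht
      rw [(hgderiv t ht').deriv]
      have h1 := hineq t ht'
      have h3 := hVsmall t ht'
      have h2 : (V₀ t)^2 ≤ ε^2 := by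
        have ha := abs_lt.mp h3
        nlinarith [ha.1, ha.2]
      have hle : deriv (fun τ => V₀ τ + U₀ τ) t - (V₀ t + U₀ t + ε^2) ≤ 0 := by linarith
      have hepos : (0:ℝ) < Real.exp (-t) := Real.exp_pos _
      nlinarith
  have key : ∀ t ∈ Set.Ico (0:ℝ) T, V₀ t + U₀ t + ε^2 ≤ -ε^2 * Real.exp t := by
    intro t ht
    have h0 : (0:ℝ) ∈ Set.Ico (0:ℝ) T := ⟨le_refl 0, hT⟩
    have hmono := hanti h0 ht ht.1
    have hg0 : g 0 ≤ -ε^2 := by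
      simp only [hgdef, neg_zero, Real.exp_zero, one_mul]
      linarith
    have hgt : Real.exp (-t) * (V₀ t + U₀ t + ε^2) ≤ -ε^2 := le_trans hmono hg0
    have hexp : Real.exp (-t) * Real.exp t = 1 := by
      rw [← Real.exp_add]; simp
    have hmul := mul_le_mul_of_nonneg_right hgt (le_of_lt (Real.exp_pos t))
    rw [mul_comm (Real.exp (-t)) _, mul_assoc, hexp, mul_one] at hmul
    linarith
  refine ⟨fun t ht => by have := key t ht; nlinarith [sq_nonneg ε], ?_⟩
  intro hL
  set L := Real.log 2 - 2 * Real.log ε with hLdef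
  set t₀ := (max 0 L + T) / 2 with ht₀def
  have hM0 : (0:ℝ) ≤ max 0 L := le_max_left _ _
  have hML : L ≤ max 0 L := le_max_right _ _
  have hMT : max 0 L < T := max_lt hT hL
  have ht₀pos : 0 < t₀ := by rw [ht₀def]; linarith
  have ht₀T : t₀ < T := by rw [ht₀def]; linarith
  have ht₀L : L < t₀ := by rw [ht₀def]; linarith
  have hexpL : Real.exp L = 2 / ε^2 := by
    rw [hLdef, show (2:ℝ) * Real.log ε = Real.log (ε^2) from by
      rw [Real.log_pow]; norm_num, Real.exp_sub, Real.exp_log two_pos,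
      Real.exp_log (pow_pos hε 2)]
  have hexpt : 2 / ε^2 < Real.exp t₀ := by
    rw [← hexpL]; exact Real.exp_lt_exp.mpr ht₀L
  have h2lt : 2 < ε^2 * Real.exp t₀ := by
    have hε2 : (0:ℝ) < ε^2 := pow_pos hε 2
    rw [div_lt_iff₀ hε2] at hexpt
    linarith [hexpt]
  have hkey := key t₀ ⟨le_of_lt ht₀pos, ht₀T⟩
  have hVb := hVsmall t₀ ⟨le_of_lt ht₀pos, ht₀T⟩
  have hVlt := (abs_lt.mp hVb).1
  have hU1 : U₀ t₀ < -1 := by nlinarith [sq_nonneg (ε - 1)]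
  exact ⟨t₀, ⟨ht₀pos, ht₀T⟩, lt_abs.mpr (Or.inr (by linarith))⟩
end
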